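/- If C_n is an even cycle of order n, then 𝔡(C_n) = n − 2. -/

import Mathlib

open SimpleGraph Finset
open Fin.NatCast Fin.CommRing

/-- Distance from a vertex to a finite set of vertices:
`min_{w ∈ S} d(u, w)`. -/
noncomputable def setDist {V : Type*} (G : SimpleGraph V) (u : V) (S : Finset V) : ℕ :=
  sInf (G.dist u '' (S : Set V))

/-- The set `𝒟_G(x,y)` of vertices distinguishing `x` and `y`. -/
noncomputable def DG {V : Type*} (G : SimpleGraph V) [Fintype V] (x y : V) : Finset V :=
  Finset.univ.filter fun z => G.dist z x ≠ G.dist z y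

/-- `𝔡(G) = min_{x ≠ y} |𝒟_G(x,y)|`. -/
noncomputable def frakd {V : Type*} (G : SimpleGraph V) [Fintype V] : ℕ :=
  sInf {m | ∃ x y : V, x ≠ y ∧ (DG G x y).card = m}

/-- `𝔡*(G) = max_{x ≠ y} |𝒟_G(x,y)|`. -/
noncomputable def frakdStar {V : Type*} (G : SimpleGraph V) [Fintype V] : ℕ :=
  sSup {m | ∃ x y : V, x ≠ y ∧ (DG G x y).card = m}

/-- A partition of the vertex set is a `k`-partition generator if every pair of
distinct vertices is distinguished by at least `k` parts. -/
noncomputable def IsKPartitionGenerator {V : Type*} (G : SimpleGraph V) [Fintype V]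
    [DecidableEq V] (k : ℕ) (P : Finpartition (Finset.univ : Finset V)) : Prop :=
  ∀ u v : V, u ≠ v → k ≤ (P.parts.filter fun S => setDist G u S ≠ setDist G v S).card

/-- The `k`-partition dimension `pd_k(G)`. -/
noncomputable def pd {V : Type*} (G : SimpleGraph V) [Fintype V] [DecidableEq V] (k : ℕ) : ℕ :=
  sInf {m | ∃ P : Finpartition (Finset.univ : Finset V),
    IsKPartitionGenerator G k P ∧ P.parts.card = m}

/-- A set of vertices is a `k`-metric generator if every pair of distinct
vertices is distinguished by at least `k` of its vertices. -/
def IsKMetricGenerator {V : Type*} (G : SimpleGraph V) [Fintype V] (k : ℕ) (W : Finset V) : Prop :=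
  ∀ u v : V, u ≠ v → k ≤ (W.filter fun z => G.dist z u ≠ G.dist z v).card

/-- The `k`-metric dimension `dim_k(G)`. -/
noncomputable def metricDim {V : Type*} (G : SimpleGraph V) [Fintype V] (k : ℕ) : ℕ :=
  sInf {m | ∃ W : Finset V, IsKMetricGenerator G k W ∧ W.card = m}

private lemma mod2' (x n : ℕ) (hn : 0 < n) (h : x < 2 * n) :
    x % n = if x < n then x else x - n := by
  split
  · exact Nat.mod_eq_of_lt ‹_›
  · rw [Nat.mod_eq_sub_mod (by omega), Nat.mod_eq_of_lt (by omega)]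

section cyc
variable {n : ℕ} [NeZero n] (hn : 4 ≤ n)
include hn

private lemma subval (a b : Fin n) :
    (a - b).val = if b.val ≤ a.val then a.val - b.val else a.val + n - b.val := by
  have hb := b.isLt; have ha := a.isLt
  rw [Fin.sub_def]
  simp only
  rw [mod2' _ n (by omega) (by omega)]
  split <;> split <;> omega

private lemma adjval {u w : Fin n} (h : (cycleGraph n).Adj u w) :
    (w - u).val = 1 ∨ (w - u).val = n - 1 := by
  rw [cycleGraph_adj'] at h
  rcases h with h | h
  · right
    rw [subval hn] at h ⊢
    have := u.isLt; have := w.isLt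
    split at h <;> split <;> omega
  · left; exact h

private lemma exists_walk (k : ℕ) (u : Fin n) :
    ∃ p : (cycleGraph n).Walk u (u + (k : Fin n)), p.length = k := by
  induction k generalizing u with
  | zero => exact ⟨Walk.nil.copy rfl (by rw [Nat.cast_zero, add_zero]), by simp⟩
  | succ k ih =>
    have hadj : (cycleGraph n).Adj u (u + 1) := by
      rw [cycleGraph_adj']
      right
      have : u + 1 - u = 1 := by ring
      rw [this, Fin.val_one', Nat.mod_eq_of_lt (by omega)]
    obtain ⟨p, hp⟩ := ih (u + 1)
    have he : u + ((k+1 : ℕ) : Fin n) = (u + 1) + (k : Fin n) := by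
      push_cast; ring
    exact ⟨(p.cons hadj).copy rfl he.symm, by simp [hp]⟩

private lemma walk_lb {u v : Fin n} (p : (cycleGraph n).Walk u v) :
    min (v - u).val (n - (v - u).val) ≤ p.length := by
  induction p with
  | nil => simp
  | @cons u w v h p ih =>
    have hvw := (v - w).isLt
    have hkey : (v - u).val = ((v - w).val + (w - u).val) % n := by
      have : v - u = (v - w) + (w - u) := by ring
      rw [this, Fin.add_def]
    rcases adjval hn h with h1 | h1 <;>
    · rw [h1] at hkey
      rw [mod2' _ n (by omega) (by omega)] at hkey
      rw [Walk.length_cons]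
      split at hkey <;> omega

private lemma dist_formula (u v : Fin n) :
    (cycleGraph n).dist u v = min (v - u).val (n - (v - u).val) := by
  have h1 : (cycleGraph n).dist u v ≤ (v - u).val := by
    obtain ⟨p, hp⟩ := exists_walk hn (v - u).val u
    have : u + ((v - u).val : Fin n) = v := by
      rw [Fin.cast_val_eq_self]; ring
    calc (cycleGraph n).dist _ _ ≤ (p.copy rfl this).length := SimpleGraph.dist_le _
      _ = _ := by simp [hp]
  have h2 : (cycleGraph n).dist u v ≤ (u - v).val := by
    rw [SimpleGraph.dist_comm]
    obtain ⟨p, hp⟩ := exists_walk hn (u - v).val v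
    have : v + ((u - v).val : Fin n) = u := by
      rw [Fin.cast_val_eq_self]; ring
    calc (cycleGraph n).dist _ _ ≤ (p.copy rfl this).length := SimpleGraph.dist_le _
      _ = _ := by simp [hp]
  rcases eq_or_ne u v with rfl | hne
  · simp [SimpleGraph.dist_self, subval hn]
  · have hsum : (u - v).val = n - (v - u).val := by
      rw [subval hn, subval hn]
      have := Fin.val_ne_iff.mpr hne.symm  -- maybe not needed
      have h3 : u.val ≠ v.val := fun h => hne (Fin.ext h)
      have := u.isLt; have := v.isLt
      split <;> split <;> omega
    refine le_antisymm (le_min h1 (hsum ▸ h2)) ?_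
    have hr : (cycleGraph n).Reachable u v := by
      obtain ⟨p, _⟩ := exists_walk hn (v - u).val u
      have : u + ((v - u).val : Fin n) = v := by
        rw [Fin.cast_val_eq_self]; ring
      exact ⟨p.copy rfl this⟩
    obtain ⟨p, hp⟩ := hr.exists_walk_length_eq_dist
    exact hp ▸ walk_lb hn p


end cyc

section cyc2
variable {n : ℕ} [NeZero n] (hn : 4 ≤ n)
include hn

private lemma sub_ne_zero_val {a b : Fin n} (h : a ≠ b) : (a - b).val ≠ 0 := by
  intro h0
  exact h (by rw [← sub_eq_zero]; exact Fin.ext h0)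

private lemma equi_subset (he : Even n) (x y : Fin n) (hxy : x ≠ y) :
    (univ.filter fun z => (cycleGraph n).dist z x = (cycleGraph n).dist z y) ⊆
      {x - (((n - (y - x).val)/2 : ℕ) : Fin n),
       x - (((n - (y - x).val)/2 + n/2 : ℕ) : Fin n)} := by
  intro z hz
  simp only [mem_filter, mem_univ, true_and] at hz
  rw [dist_formula hn, dist_formula hn] at hz
  have hrel : (y - z).val = ((y - x).val + (x - z).val) % n := by
    have h : y - z = (y - x) + (x - z) := by ring
    rw [h, Fin.add_def]
  have hcn := (y - x).isLt
  have htn := (x - z).isLt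
  have hc0 : (y - x).val ≠ 0 := sub_ne_zero_val hn hxy.symm
  rw [mod2' _ n (by omega) (by omega)] at hrel
  obtain ⟨m, hm⟩ := he
  have key : (x - z).val = (n - (y - x).val)/2 ∨
      (x - z).val = (n - (y - x).val)/2 + n/2 := by
    split at hrel <;> omega
  have hzx : ∀ k : ℕ, (x - z).val = k → z = x - ((k : ℕ) : Fin n) := by
    intro k hk
    rw [← hk, Fin.cast_val_eq_self]
    ring
  rcases key with h | h
  · rw [hzx _ h]
    exact mem_insert_self _ _
  · rw [hzx _ h]
    exact mem_insert_of_mem (mem_singleton_self _)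

private lemma equi_card_le (he : Even n) (x y : Fin n) (hxy : x ≠ y) :
    (univ.filter fun z => (cycleGraph n).dist z x = (cycleGraph n).dist z y).card ≤ 2 :=
  le_trans (card_le_card (equi_subset hn he x y hxy))
    ((card_insert_le _ _).trans (by simp))

private lemma DG_card (x y : Fin n) :
    (DG (cycleGraph n) x y).card =
      n - (univ.filter fun z => (cycleGraph n).dist z x = (cycleGraph n).dist z y).card := by
  have hs := Finset.card_filter_add_card_filter_not
    (s := (univ : Finset (Fin n)))
    (p := fun z => (cycleGraph n).dist z x = (cycleGraph n).dist z y)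
  simp only [card_univ, Fintype.card_fin] at hs
  have hd : DG (cycleGraph n) x y =
      univ.filter (fun z => ¬((cycleGraph n).dist z x = (cycleGraph n).dist z y)) :=
    filter_congr (fun _ _ => Iff.rfl)
  rw [hd]
  have hle := card_filter_le (univ : Finset (Fin n))
    (fun z => (cycleGraph n).dist z x = (cycleGraph n).dist z y)
  omega

end cyc2

theorem stmt_8 (n : ℕ) (hn : 4 ≤ n) (he : Even n) :
    frakd (SimpleGraph.cycleGraph n) = n - 2 := by
  haveI : NeZero n := ⟨by omega⟩
  obtain ⟨m, hm⟩ := id he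
  have hm2 : 2 ≤ m := by omega
  set G := SimpleGraph.cycleGraph n with hG
  set x : Fin n := ⟨0, by omega⟩
  set y : Fin n := ⟨2, by omega⟩
  set z1 : Fin n := ⟨1, by omega⟩
  set z2 : Fin n := ⟨m + 1, by omega⟩
  have hxy : x ≠ y := by simp [x, y, Fin.ext_iff]
  set E := univ.filter fun z => G.dist z x = G.dist z y with hE
  have hz1 : z1 ∈ E := by
    simp only [hE, mem_filter, mem_univ, true_and, hG]
    rw [dist_formula hn, dist_formula hn, subval hn, subval hn]
    simp only [x, y, z1]
    split_ifs <;> omega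
  have hz2 : z2 ∈ E := by
    simp only [hE, mem_filter, mem_univ, true_and, hG]
    rw [dist_formula hn, dist_formula hn, subval hn, subval hn]
    simp only [x, y, z2]
    split_ifs <;> omega
  have hEcard : E.card = 2 := by
    refine le_antisymm (equi_card_le hn he x y hxy) ?_
    have hsub : ({z1, z2} : Finset (Fin n)) ⊆ E := by
      intro w hw
      rcases mem_insert.mp hw with rfl | hw
      · exact hz1
      · rw [mem_singleton.mp hw]; exact hz2
    have h12 : z1 ≠ z2 := by simp [z1, z2, Fin.ext_iff]; omega
    calc 2 = ({z1, z2} : Finset (Fin n)).card := by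
            rw [card_insert_of_notMem (by simp [h12]), card_singleton]
      _ ≤ E.card := card_le_card hsub
  have hmem : n - 2 ∈ {m | ∃ x y : Fin n, x ≠ y ∧ (DG G x y).card = m} := by
    refine ⟨x, y, hxy, ?_⟩
    rw [DG_card hn, ← hE, hEcard]
  refine le_antisymm (Nat.sInf_le hmem) (le_csInf ⟨_, hmem⟩ ?_)
  rintro b ⟨u, v, huv, rfl⟩
  rw [DG_card hn]
  have := equi_card_le hn he u v huv
  omega
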